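/- Let a finite irreducible Markov jump process have rates λ(x,y) = a(x,y) e^{-β(Γ(x)+U(x,y))}. If Θ(x) = min_T U(T_x) = 0 for all x (strongly connected digraph of preferred transitions) then the states maximizing lim_{β→∞} (1/β) log ρ(x) are exactly the states maximizing Γ(x), i.e., the states with the longest log-asymptotic lifetime. -/

import Mathlib

open scoped Classical
open Filter

/-- `t : K → K` is a spanning in-tree (parent map) rooted at `x`. -/
def IsInTree {K : Type*} (x : K) (t : K → K) : Prop :=
  t x = x ∧ ∀ y, ∃ n : ℕ, t^[n] y = x

/-- Spanning in-trees to `x` using only edges with positive reactivity. -/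
noncomputable def treesA {K : Type*} [Fintype K] [DecidableEq K]
    (a : K → K → ℝ) (x : K) : Finset (K → K) :=
  Finset.univ.filter (fun t => IsInTree x t ∧ ∀ y, y ≠ x → 0 < a y (t y))

/-- `U(T_x)`: sum of `U` over the oriented edges of the in-tree `t` to `x`. -/
noncomputable def UT {K : Type*} [Fintype K] [DecidableEq K]
    (U : K → K → ℝ) (x : K) (t : K → K) : ℝ :=
  ∑ y ∈ Finset.univ.filter (· ≠ x), U y (t y)

/-- Kirchhoff weight for the rates `λ_β(y,z) = a(y,z) e^{-β(Γ(y)+U(y,z))}`. -/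
noncomputable def Wβ {K : Type*} [Fintype K] [DecidableEq K]
    (a : K → K → ℝ) (Γ : K → ℝ) (U : K → K → ℝ) (β : ℝ) (x : K) : ℝ :=
  ∑ t ∈ treesA a x, ∏ y ∈ Finset.univ.filter (· ≠ x),
    a y (t y) * Real.exp (-β * (Γ y + U y (t y)))

/-- Stationary distribution from Kirchhoff's formula. -/
noncomputable def ρ {K : Type*} [Fintype K] [DecidableEq K]
    (a : K → K → ℝ) (Γ : K → ℝ) (U : K → K → ℝ) (β : ℝ) (x : K) : ℝ :=
  Wβ a Γ U β x / ∑ z : K, Wβ a Γ U β z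

/-- Laplace principle for finite sums of exponentials. -/
lemma log_sum_exp_tendsto {ι : Type*} (s : Finset ι) (hs : s.Nonempty) (c b : ι → ℝ)
    (hc : ∀ i ∈ s, 0 < c i) :
    Tendsto (fun β : ℝ => Real.log (∑ i ∈ s, c i * Real.exp (β * b i)) / β) atTop
      (nhds (s.sup' hs b)) := by
  obtain ⟨i0, hi0, hbi0⟩ := s.exists_mem_eq_sup' hs b
  set M := s.sup' hs b with hM
  have hpos : ∀ β : ℝ, 0 < ∑ i ∈ s, c i * Real.exp (β * b i) := fun β =>
    Finset.sum_pos (fun i hi => mul_pos (hc i hi) (Real.exp_pos _)) hs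
  have hC : 0 < ∑ i ∈ s, c i := Finset.sum_pos hc hs
  have hdiv : ∀ C : ℝ, Tendsto (fun β : ℝ => C / β + M) atTop (nhds M) := by
    intro C
    have h0 : Tendsto (fun β : ℝ => C / β) atTop (nhds 0) :=
      Tendsto.div_atTop tendsto_const_nhds tendsto_id
    simpa using h0.add (tendsto_const_nhds (x := M))
  refine tendsto_of_tendsto_of_tendsto_of_le_of_le' (hdiv (Real.log (c i0)))
    (hdiv (Real.log (∑ i ∈ s, c i))) ?_ ?_
  · filter_upwards [eventually_gt_atTop (0 : ℝ)] with β hβ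
    have hterm : c i0 * Real.exp (β * M) ≤ ∑ i ∈ s, c i * Real.exp (β * b i) := by
      have := Finset.single_le_sum
        (f := fun i => c i * Real.exp (β * b i))
        (fun i hi => le_of_lt (mul_pos (hc i hi) (Real.exp_pos _))) hi0
      simpa only [← hbi0] using this
    have hlog : Real.log (c i0) + β * M ≤
        Real.log (∑ i ∈ s, c i * Real.exp (β * b i)) := by
      have := Real.log_le_log (mul_pos (hc i0 hi0) (Real.exp_pos _)) hterm
      rwa [Real.log_mul (ne_of_gt (hc i0 hi0)) (ne_of_gt (Real.exp_pos _)),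
        Real.log_exp] at this
    calc Real.log (c i0) / β + M = (Real.log (c i0) + β * M) / β := by
          field_simp
      _ ≤ Real.log (∑ i ∈ s, c i * Real.exp (β * b i)) / β := by gcongr
  · filter_upwards [eventually_gt_atTop (0 : ℝ)] with β hβ
    have hterm : (∑ i ∈ s, c i * Real.exp (β * b i)) ≤
        (∑ i ∈ s, c i) * Real.exp (β * M) := by
      rw [Finset.sum_mul]
      refine Finset.sum_le_sum fun i hi => ?_
      have : Real.exp (β * b i) ≤ Real.exp (β * M) :=
        Real.exp_le_exp.mpr (mul_le_mul_of_nonneg_left (Finset.le_sup' b hi) hβ.le)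
      exact mul_le_mul_of_nonneg_left this (hc i hi).le
    have hlog : Real.log (∑ i ∈ s, c i * Real.exp (β * b i)) ≤
        Real.log (∑ i ∈ s, c i) + β * M := by
      have := Real.log_le_log (hpos β) hterm
      rwa [Real.log_mul (ne_of_gt hC) (ne_of_gt (Real.exp_pos _)),
        Real.log_exp] at this
    calc Real.log (∑ i ∈ s, c i * Real.exp (β * b i)) / β
        ≤ (Real.log (∑ i ∈ s, c i) + β * M) / β := by gcongr
      _ = Real.log (∑ i ∈ s, c i) / β + M := by field_simp

lemma prodA_pos {K : Type*} [Fintype K] [DecidableEq K] (a : K → K → ℝ) (x : K)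
    {t : K → K} (ht : t ∈ treesA a x) :
    0 < ∏ y ∈ Finset.univ.filter (· ≠ x), a y (t y) := by
  refine Finset.prod_pos fun y hy => ?_
  exact (Finset.mem_filter.mp ht).2.2 y (Finset.mem_filter.mp hy).2

lemma Wβ_eq {K : Type*} [Fintype K] [DecidableEq K]
    (a : K → K → ℝ) (Γ : K → ℝ) (U : K → K → ℝ) (β : ℝ) (x : K) :
    Wβ a Γ U β x = ∑ t ∈ treesA a x,
      (∏ y ∈ Finset.univ.filter (· ≠ x), a y (t y)) *
        Real.exp (β * (Γ x - (∑ y : K, Γ y) - UT U x t)) := by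
  have hsum : ∑ y ∈ Finset.univ.filter (· ≠ x), Γ y = (∑ y : K, Γ y) - Γ x := by
    rw [Finset.filter_ne' Finset.univ x, Finset.sum_erase_eq_sub (Finset.mem_univ x)]
  unfold Wβ
  refine Finset.sum_congr rfl fun t ht => ?_
  rw [Finset.prod_mul_distrib, ← Real.exp_sum]
  congr 1
  rw [← Finset.mul_sum, Finset.sum_add_distrib, hsum]
  unfold UT
  ring

lemma Wβ_pos {K : Type*} [Fintype K] [DecidableEq K]
    (a : K → K → ℝ) (Γ : K → ℝ) (U : K → K → ℝ) (β : ℝ) (x : K)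
    (hne : (treesA a x).Nonempty) : 0 < Wβ a Γ U β x := by
  rw [Wβ_eq]
  exact Finset.sum_pos (fun t ht => mul_pos (prodA_pos a x ht) (Real.exp_pos _)) hne

/-- If `Θ ≡ 0` (strongly connected digraph of preferred transitions) then
`lim_β (1/β) log ρ(x) = Γ(x) − max_y Γ(y)`: the asymptotically dominant states are
exactly those with the longest log-asymptotic lifetime `Γ`. -/
theorem stmt18 {K : Type*} [Fintype K] [DecidableEq K] [Nonempty K]
    (a : K → K → ℝ) (Γ : K → ℝ) (U : K → K → ℝ)
    (ha : ∀ y z, 0 ≤ a y z) (hU : ∀ y z, 0 ≤ U y z)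
    (hne : ∀ x : K, (treesA a x).Nonempty)
    (hΘ0 : ∀ x : K, (treesA a x).inf' (hne x) (UT U x) = 0) :
    ∀ x : K,
      Tendsto (fun β : ℝ => Real.log (ρ a Γ U β x) / β) atTop
        (nhds (Γ x - Finset.univ.sup' Finset.univ_nonempty Γ)) := by
  classical
  intro x
  set S : ℝ := ∑ y : K, Γ y with hS
  set MΓ : ℝ := Finset.univ.sup' Finset.univ_nonempty Γ with hMΓ
  -- numerator
  have hnum := log_sum_exp_tendsto (treesA a x) (hne x)
      (fun t => ∏ y ∈ Finset.univ.filter (· ≠ x), a y (t y))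
      (fun t => Γ x - S - UT U x t) (fun t ht => prodA_pos a x ht)
  have hUT0 : ∀ z : K, ∀ t ∈ treesA a z, 0 ≤ UT U z t := by
    intro z t ht
    have h := Finset.inf'_le (UT U z) ht
    rw [hΘ0 z] at h
    exact h
  have hUTex : ∀ z : K, ∃ t ∈ treesA a z, UT U z t = 0 := by
    intro z
    obtain ⟨t0, ht0, hUt0⟩ := (treesA a z).exists_mem_eq_inf' (hne z) (UT U z)
    exact ⟨t0, ht0, by rw [← hUt0, hΘ0 z]⟩
  have hsupnum : (treesA a x).sup' (hne x) (fun t => Γ x - S - UT U x t)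
      = Γ x - S := by
    apply le_antisymm
    · refine Finset.sup'_le _ _ fun t ht => ?_
      have := hUT0 x t ht
      show Γ x - S - UT U x t ≤ Γ x - S
      linarith
    · obtain ⟨t0, ht0, h0⟩ := hUTex x
      have := Finset.le_sup' (f := fun t => Γ x - S - UT U x t) ht0
      simp only [h0, sub_zero] at this
      linarith
  rw [hsupnum] at hnum
  have hnum' : Tendsto (fun β : ℝ => Real.log (Wβ a Γ U β x) / β) atTop
      (nhds (Γ x - S)) := by
    refine hnum.congr fun β => ?_
    rw [← Wβ_eq]
  -- denominator over the sigma type of pairs (z, tree to z)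
  set P : Finset ((_ : K) × (K → K)) := Finset.univ.sigma (fun z => treesA a z)
    with hP
  have hPne : P.Nonempty := by
    obtain ⟨z⟩ := ‹Nonempty K›
    obtain ⟨t, ht⟩ := hne z
    exact ⟨⟨z, t⟩, Finset.mem_sigma.mpr ⟨Finset.mem_univ z, ht⟩⟩
  have hden := log_sum_exp_tendsto P hPne
      (fun p => ∏ y ∈ Finset.univ.filter (· ≠ p.1), a y (p.2 y))
      (fun p => Γ p.1 - S - UT U p.1 p.2)
      (fun p hp => prodA_pos a p.1 (Finset.mem_sigma.mp hp).2)
  have hsupden : P.sup' hPne (fun p => Γ p.1 - S - UT U p.1 p.2) = MΓ - S := by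
    apply le_antisymm
    · refine Finset.sup'_le _ _ fun p hp => ?_
      have h1 := hUT0 p.1 p.2 (Finset.mem_sigma.mp hp).2
      have h2 : Γ p.1 ≤ MΓ := Finset.le_sup' Γ (Finset.mem_univ p.1)
      show Γ p.1 - S - UT U p.1 p.2 ≤ MΓ - S
      linarith
    · obtain ⟨z0, _, hz0⟩ := Finset.univ.exists_mem_eq_sup' Finset.univ_nonempty Γ
      obtain ⟨t0, ht0, h0⟩ := hUTex z0
      have hmem : (⟨z0, t0⟩ : (_ : K) × (K → K)) ∈ P :=
        Finset.mem_sigma.mpr ⟨Finset.mem_univ z0, ht0⟩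
      have := Finset.le_sup' (f := fun p : (_ : K) × (K → K) =>
        Γ p.1 - S - UT U p.1 p.2) hmem
      simp only [h0] at this
      calc MΓ - S = Γ z0 - S - 0 := by rw [hMΓ, hz0]; ring
        _ ≤ _ := by linarith
  rw [hsupden] at hden
  have hden' : Tendsto (fun β : ℝ => Real.log (∑ z : K, Wβ a Γ U β z) / β) atTop
      (nhds (MΓ - S)) := by
    refine hden.congr fun β => ?_
    have hsig : (∑ p ∈ P, (∏ y ∈ Finset.univ.filter (· ≠ p.1), a y (p.2 y)) *
        Real.exp (β * (Γ p.1 - S - UT U p.1 p.2))) = ∑ z : K, Wβ a Γ U β z := by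
      rw [hP, Finset.sum_sigma]
      refine Finset.sum_congr rfl fun z _ => ?_
      rw [hS, Wβ_eq a Γ U β z]
    rw [← hsig]
  -- combine
  have hfinal := hnum'.sub hden'
  have hval : Γ x - S - (MΓ - S) = Γ x - MΓ := by ring
  rw [hval] at hfinal
  refine hfinal.congr fun β => ?_
  have h1 : 0 < Wβ a Γ U β x := Wβ_pos a Γ U β x (hne x)
  have h2 : 0 < ∑ z : K, Wβ a Γ U β z :=
    Finset.sum_pos (fun z _ => Wβ_pos a Γ U β z (hne z)) Finset.univ_nonempty
  rw [ρ, Real.log_div h1.ne' h2.ne', sub_div]
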